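/- arXiv:2105.03606 — 7 statements merged into one kernel-verified Lean document; each statement's English description precedes it below -/
import Mathlib

section
/- Multi-channel Kraft inequality: if a (q_1,…,q_n)-ary source code for m source symbols is uniquely decodable, then Σ_{j=1}^m Π_{i=1}^n q_i^{−ℓ_i^j} ≤ 1, where ℓ_i^j is the length of the i-th component of the j-th codeword. -/
/-- Channel-wise concatenation of the codewords of a finite sequence of source symbols:
the `i`-th component is the concatenation of the `i`-th components of the codewords. -/
def encodeSeq {n m : ℕ} {q : Fin n → ℕ} (C : Fin m → ∀ i, List (Fin (q i)))
    (s : List (Fin m)) : ∀ i, List (Fin (q i)) :=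
  fun i => (s.map fun j => C j i).flatten

/-- A multi-channel source code is uniquely decodable if any two distinct finite sequences of
source symbols yield distinct channel-wise concatenations of their codewords. -/
def UniquelyDecodable {n m : ℕ} {q : Fin n → ℕ}
    (C : Fin m → ∀ i, List (Fin (q i))) : Prop :=
  Function.Injective (encodeSeq C)

/-- If `x ≥ 0` and `x ^ k` is bounded by a polynomial in `k`, then `x ≤ 1`. -/
lemma pow_le_poly_imp_le_one {x : ℝ} (hx : 0 ≤ x) (c : ℝ) (n : ℕ)
    (h : ∀ k : ℕ, 1 ≤ k → x ^ k ≤ c * (k : ℝ) ^ n) : x ≤ 1 := by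
  by_contra hlt
  push_neg at hlt
  have hx0 : x ≠ 0 := by positivity
  have hr : ‖x⁻¹‖ < 1 := by
    rw [Real.norm_eq_abs, abs_of_nonneg (by positivity)]
    exact inv_lt_one_of_one_lt₀ hlt
  have hsum : Summable (fun k : ℕ => (k : ℝ) ^ n * x⁻¹ ^ k) :=
    summable_pow_mul_geometric_of_norm_lt_one n hr
  have htend := hsum.tendsto_atTop_zero
  have hc0 : (0 : ℝ) < c := by
    have h1 := h 1 le_rfl
    simp only [pow_one, Nat.cast_one, one_pow, mul_one] at h1
    linarith
  have hev : ∀ᶠ k : ℕ in Filter.atTop, (k : ℝ) ^ n * x⁻¹ ^ k < c⁻¹ := by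
    have := htend.eventually (eventually_lt_nhds (show (0:ℝ) < c⁻¹ by positivity))
    simpa using this
  obtain ⟨k, hk1, hklt⟩ := (hev.and (Filter.eventually_ge_atTop 1)).exists
  have hbound := h k hklt
  have hxk : (0:ℝ) < x ^ k := pow_pos (lt_trans one_pos hlt) k
  have key : (1 : ℝ) = x ^ k * x⁻¹ ^ k := by
    rw [← mul_pow, mul_inv_cancel₀ hx0, one_pow]
  have h2 : x ^ k * x⁻¹ ^ k ≤ c * ((k : ℝ) ^ n * x⁻¹ ^ k) := by
    have hinv : (0:ℝ) ≤ x⁻¹ ^ k := by positivity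
    calc x ^ k * x⁻¹ ^ k ≤ c * (k : ℝ) ^ n * x⁻¹ ^ k := by
          exact mul_le_mul_of_nonneg_right hbound hinv
      _ = c * ((k : ℝ) ^ n * x⁻¹ ^ k) := by ring
  have h3 : c * ((k : ℝ) ^ n * x⁻¹ ^ k) < c * c⁻¹ :=
    mul_lt_mul_of_pos_left hk1 hc0
  rw [mul_inv_cancel₀ (ne_of_gt hc0)] at h3
  linarith [key ▸ h2]

/-- **Multi-channel Kraft inequality**: if a `(q 1, …, q n)`-ary source code for `m` source
symbols is uniquely decodable, then `∑ j, ∏ i, (q i) ^ (-ℓᵢʲ) ≤ 1`, where `ℓᵢʲ` is the length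
of the `i`-th component of the `j`-th codeword. -/
theorem multichannel_kraft_inequality (n m : ℕ) (q : Fin n → ℕ)
    (hq : ∀ i, 2 ≤ q i) (hmono : Monotone q)
    (C : Fin m → ∀ i, List (Fin (q i)))
    (hud : UniquelyDecodable C) :
    ∑ j : Fin m, ∏ i : Fin n, ((q i : ℝ)) ^ (-((C j i).length : ℤ)) ≤ 1 := by
  classical
  have hq0 : ∀ i, (0 : ℝ) < q i := fun i => by
    have := hq i; positivity
  -- rewrite in terms of inverse powers
  set r : Fin n → ℝ := fun i => ((q i : ℝ))⁻¹ with hr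
  have hrw : ∀ j : Fin m, ∏ i : Fin n, ((q i : ℝ)) ^ (-((C j i).length : ℤ))
      = ∏ i : Fin n, r i ^ (C j i).length := by
    intro j
    refine Finset.prod_congr rfl fun i _ => ?_
    rw [zpow_neg, zpow_natCast, hr, inv_pow]
  rw [Finset.sum_congr rfl fun j _ => hrw j]
  set S : ℝ := ∑ j : Fin m, ∏ i : Fin n, r i ^ (C j i).length with hS
  have hSnonneg : 0 ≤ S := by
    apply Finset.sum_nonneg
    intro j _
    apply Finset.prod_nonneg
    intro i _
    positivity
  -- the length bound
  set B : ℕ := ∑ j : Fin m, ∑ i : Fin n, (C j i).length with hB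
  have hlenB : ∀ j i, (C j i).length ≤ B := by
    intro j i
    calc (C j i).length ≤ ∑ i : Fin n, (C j i).length :=
          Finset.single_le_sum (f := fun i => (C j i).length)
            (fun _ _ => Nat.zero_le _) (Finset.mem_univ i)
      _ ≤ B := Finset.single_le_sum (f := fun j => ∑ i : Fin n, (C j i).length)
          (fun _ _ => Nat.zero_le _) (Finset.mem_univ j)
  -- key bound : S ^ k ≤ (k*(B+1))^n for k ≥ 1
  have key : ∀ k : ℕ, 1 ≤ k → S ^ k ≤ ((B : ℝ) + 1) ^ n * (k : ℝ) ^ n := by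
    intro k hk
    -- total length vector of a sequence
    set V : (Fin k → Fin m) → (Fin n → ℕ) := fun p i => ∑ t : Fin k, (C (p t) i).length with hV
    have hlenc : ∀ (p : Fin k → Fin m) (i : Fin n),
        (encodeSeq C (List.ofFn p) i).length = V p i := by
      intro p i
      simp only [encodeSeq, List.length_flatten, List.map_map, List.map_ofFn]
      rw [List.sum_ofFn]
      rfl
    have step1 : S ^ k = ∑ p : Fin k → Fin m, ∏ i : Fin n, r i ^ V p i := by
      rw [hS, Fintype.sum_pow]
      refine Finset.sum_congr rfl fun p _ => ?_
      rw [Finset.prod_comm]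
      refine Finset.prod_congr rfl fun i _ => ?_
      rw [Finset.prod_pow_eq_pow_sum]
    -- fibers
    have hmaps : ∀ p : Fin k → Fin m, (p ∈ (Finset.univ : Finset (Fin k → Fin m))) →
        V p ∈ Fintype.piFinset (fun _ : Fin n => Finset.range (k * B + 1)) := by
      intro p _
      rw [Fintype.mem_piFinset]
      intro i
      rw [Finset.mem_range, Nat.lt_succ_iff]
      calc V p i = ∑ t : Fin k, (C (p t) i).length := rfl
        _ ≤ ∑ _t : Fin k, B := Finset.sum_le_sum fun t _ => hlenB (p t) i
        _ = k * B := by simp [mul_comm]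
    have step2 : S ^ k = ∑ v ∈ Fintype.piFinset (fun _ : Fin n => Finset.range (k * B + 1)),
        ∑ p ∈ Finset.univ.filter (fun p : Fin k → Fin m => V p = v),
          ∏ i : Fin n, r i ^ V p i := by
      rw [step1, Finset.sum_fiberwise_of_maps_to hmaps]
    -- each fiber sums to at most 1
    have fiber_le : ∀ v ∈ Fintype.piFinset (fun _ : Fin n => Finset.range (k * B + 1)),
        (∑ p ∈ Finset.univ.filter (fun p : Fin k → Fin m => V p = v),
          ∏ i : Fin n, r i ^ V p i) ≤ 1 := by
      intro v _
      have hvlen : ∀ p ∈ Finset.univ.filter (fun p : Fin k → Fin m => V p = v),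
          ∀ i, (encodeSeq C (List.ofFn p) i).length = v i := by
        intro p hp i
        rw [Finset.mem_filter] at hp
        rw [hlenc, hp.2]
      have heq : ∀ p ∈ Finset.univ.filter (fun p : Fin k → Fin m => V p = v),
          ∏ i : Fin n, r i ^ V p i = ∏ i : Fin n, r i ^ v i := by
        intro p hp
        rw [Finset.mem_filter] at hp
        rw [hp.2]
      rw [Finset.sum_congr rfl heq, Finset.sum_const, nsmul_eq_mul]
      -- cardinality bound via injection into tuples of vectors
      set F : (Fin k → Fin m) → (∀ i : Fin n, List.Vector (Fin (q i)) (v i)) :=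
        fun p i => List.Vector.ofFn (fun t : Fin (v i) =>
          (encodeSeq C (List.ofFn p) i).getD t ⟨0, by have := hq i; omega⟩) with hF
      have hinj : Set.InjOn F (Finset.univ.filter (fun p : Fin k → Fin m => V p = v)) := by
        intro p₁ hp₁ p₂ hp₂ hfe
        rw [Finset.mem_coe] at hp₁ hp₂
        have hEnc : encodeSeq C (List.ofFn p₁) = encodeSeq C (List.ofFn p₂) := by
          funext i
          apply List.ext_getElem
          · rw [hvlen p₁ hp₁ i, hvlen p₂ hp₂ i]
          · intro t h1 h2
            have ht : t < v i := by rw [← hvlen p₁ hp₁ i]; exact h1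
            have := congrArg (fun g => List.Vector.get (g i) ⟨t, ht⟩) hfe
            simp only [hF, List.Vector.get_ofFn] at this
            rwa [List.getD_eq_getElem _ _ h1, List.getD_eq_getElem _ _ h2] at this
        exact List.ofFn_injective (hud hEnc)
      have hcard : (Finset.univ.filter (fun p : Fin k → Fin m => V p = v)).card
          ≤ ∏ i : Fin n, (q i) ^ (v i) := by
        have hle := Finset.card_le_card_of_injOn F (fun p _ => Finset.mem_univ (F p)) hinj
        calc (Finset.univ.filter (fun p : Fin k → Fin m => V p = v)).card
            ≤ (Finset.univ : Finset (∀ i : Fin n, List.Vector (Fin (q i)) (v i))).card := hle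
          _ = ∏ i : Fin n, (q i) ^ (v i) := by
              rw [Finset.card_univ, Fintype.card_pi]
              exact Finset.prod_congr rfl fun i _ => by
                rw [card_vector, Fintype.card_fin]
      calc ((Finset.univ.filter (fun p : Fin k → Fin m => V p = v)).card : ℝ)
            * ∏ i : Fin n, r i ^ v i
          ≤ (∏ i : Fin n, ((q i : ℝ)) ^ (v i)) * ∏ i : Fin n, r i ^ v i := by
            apply mul_le_mul_of_nonneg_right
            · calc ((Finset.univ.filter (fun p : Fin k → Fin m => V p = v)).card : ℝ)
                  ≤ ((∏ i : Fin n, (q i) ^ (v i) : ℕ) : ℝ) := by exact_mod_cast hcard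
                _ = ∏ i : Fin n, ((q i : ℝ)) ^ (v i) := by push_cast; rfl
            · exact Finset.prod_nonneg fun i _ => by positivity
        _ = ∏ i : Fin n, (((q i : ℝ)) * r i) ^ (v i) := by
            rw [← Finset.prod_mul_distrib]
            exact Finset.prod_congr rfl fun i _ => by rw [mul_pow]
        _ = 1 := by
            rw [Finset.prod_congr rfl fun i _ => by
              rw [hr, mul_inv_cancel₀ (ne_of_gt (hq0 i)), one_pow]]
            exact Finset.prod_const_one
    calc S ^ k = _ := step2
      _ ≤ ∑ _v ∈ Fintype.piFinset (fun _ : Fin n => Finset.range (k * B + 1)), (1:ℝ) :=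
          Finset.sum_le_sum fiber_le
      _ = ((Fintype.piFinset (fun _ : Fin n => Finset.range (k * B + 1))).card : ℝ) := by
          rw [Finset.sum_const, nsmul_eq_mul, mul_one]
      _ = ((k * B + 1 : ℕ) : ℝ) ^ n := by
          rw [Fintype.card_piFinset, Finset.prod_const, Finset.card_univ, Fintype.card_fin,
            Finset.card_range]
          push_cast
          ring
      _ ≤ ((B : ℝ) + 1) ^ n * (k : ℝ) ^ n := by
          rw [← mul_pow]
          apply pow_le_pow_left₀ (by positivity)
          push_cast
          have hk1 : (1 : ℝ) ≤ (k : ℝ) := by exact_mod_cast hk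
          nlinarith [Nat.cast_nonneg (α := ℝ) B]
  exact pow_le_poly_imp_le_one hSnonneg _ n key
end

section
/- Multi-channel entropy bound: if Q is a uniquely decodable (q_1,…,q_n)-ary code for a source Z with probability distribution (p_1,…,p_m) where every p_j > 0, then Σ_{j=1}^m p_j Σ_{i=1}^n ℓ_i^j ln q_i ≥ H(Z), where H(Z) = −Σ_{j=1}^m p_j ln p_j. -/
open Finset Real Filter

lemma encodeSeq_length {n m : ℕ} {q : Fin n → ℕ} (C : Fin m → ∀ i, List (Fin (q i)))
    {k : ℕ} (f : Fin k → Fin m) (i : Fin n) :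
    (encodeSeq C (List.ofFn f) i).length = ∑ t, (C (f t) i).length := by
  simp [encodeSeq, List.length_flatten, List.map_ofFn, List.sum_ofFn, Function.comp]

lemma kraft_sum_le_one {n m : ℕ} {q : Fin n → ℕ} (hq : ∀ i, 2 ≤ q i)
    (C : Fin m → ∀ i, List (Fin (q i))) (hud : UniquelyDecodable C) :
    ∑ j, ∏ i, ((q i : ℝ))⁻¹ ^ (C j i).length ≤ 1 := by
  classical
  have hqpos : ∀ i, (0:ℝ) < q i := fun i => by
    have := hq i; positivity
  set w : Fin m → ℝ := fun j => ∏ i, ((q i : ℝ))⁻¹ ^ (C j i).length with hw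
  set S : ℝ := ∑ j, w j with hS
  set B : ℕ := Finset.univ.sup (fun j : Fin m => Finset.univ.sup fun i : Fin n => (C j i).length)
    with hB
  have hlB : ∀ j i, (C j i).length ≤ B := by
    intro j i
    refine le_trans (Finset.le_sup (f := fun i : Fin n => (C j i).length) (Finset.mem_univ i)) ?_
    exact Finset.le_sup (f := fun j : Fin m => Finset.univ.sup fun i : Fin n => (C j i).length)
      (Finset.mem_univ j)
  -- main counting bound
  have key : ∀ k : ℕ, S ^ k ≤ ((k * B + 1 : ℕ) : ℝ) ^ n := by
    intro k
    -- length-vector map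
    set F : (Fin k → Fin m) → (Fin n → ℕ) := fun f i => ∑ t, (C (f t) i).length with hF
    set T : Finset (Fin n → ℕ) := Fintype.piFinset (fun _ => Finset.range (k * B + 1)) with hT
    have hmaps : ∀ f : Fin k → Fin m, f ∈ (Finset.univ : Finset (Fin k → Fin m)) → F f ∈ T := by
      intro f _
      rw [hT, Fintype.mem_piFinset]
      intro i
      rw [Finset.mem_range, Nat.lt_succ_iff]
      calc F f i ≤ ∑ _t : Fin k, B := Finset.sum_le_sum fun t _ => hlB (f t) i
        _ = k * B := by simp [mul_comm]
    have expand : S ^ k = ∑ f : Fin k → Fin m, ∏ i, ((q i : ℝ))⁻¹ ^ F f i := by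
      rw [hS, Finset.sum_pow']
      rw [show Fintype.piFinset (fun _ : Fin k => (Finset.univ : Finset (Fin m))) = Finset.univ
        by ext f; simp]
      refine Finset.sum_congr rfl fun f _ => ?_
      rw [hw]
      rw [Finset.prod_comm]
      exact Finset.prod_congr rfl fun i _ => by
        rw [Finset.prod_pow_eq_pow_sum]
    -- fiber counting
    have fiber : ∀ v ∈ T,
        ((Finset.univ.filter fun f : Fin k → Fin m => F f = v)).card ≤ ∏ i, (q i) ^ v i := by
      intro v _
      rw [← Fintype.card_subtype]
      have : Fintype.card (∀ i, Fin (v i) → Fin (q i)) = ∏ i, (q i) ^ v i := by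
        simp [Fintype.card_pi, Fintype.card_fun]
      rw [← this]
      have hlt : ∀ (f : {f : Fin k → Fin m // F f = v}) (i : Fin n) (t : Fin (v i)),
          (t : ℕ) < (encodeSeq C (List.ofFn f.1) i).length := by
        intro f i t
        rw [encodeSeq_length]
        have : F f.1 i = v i := by rw [f.2]
        exact lt_of_lt_of_le t.2 this.ge
      refine Fintype.card_le_of_injective
        (fun f => fun i t => (encodeSeq C (List.ofFn f.1) i).get ⟨t, hlt f i t⟩) ?_
      · intro f g hfg
        have hlen : ∀ i, (encodeSeq C (List.ofFn f.1) i).length =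
            (encodeSeq C (List.ofFn g.1) i).length := by
          intro i; rw [encodeSeq_length, encodeSeq_length]
          have := f.2; have := g.2
          show F f.1 i = F g.1 i
          rw [f.2, g.2]
        have henc : encodeSeq C (List.ofFn f.1) = encodeSeq C (List.ofFn g.1) := by
          funext i
          apply List.ext_get (hlen i)
          intro t h1 h2
          have ht : t < v i := by
            have h1' := h1
            rw [encodeSeq_length] at h1'
            have hfv : F f.1 i = v i := by rw [f.2]
            exact lt_of_lt_of_le h1' hfv.le
          have := congrFun (congrFun hfg i) ⟨t, ht⟩
          simpa using this
        have := hud henc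
        exact Subtype.ext (List.ofFn_injective this)
    calc S ^ k = ∑ v ∈ T, ∑ f ∈ Finset.univ.filter fun f : Fin k → Fin m => F f = v,
          ∏ i, ((q i : ℝ))⁻¹ ^ F f i := by
          rw [expand, Finset.sum_fiberwise_of_maps_to hmaps]
      _ ≤ ∑ _v ∈ T, (1 : ℝ) := by
          apply Finset.sum_le_sum
          intro v hv
          have : ∀ f ∈ Finset.univ.filter fun f : Fin k → Fin m => F f = v,
              ∏ i, ((q i : ℝ))⁻¹ ^ F f i = ∏ i, ((q i : ℝ))⁻¹ ^ v i := by
            intro f hf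
            rw [Finset.mem_filter] at hf
            exact Finset.prod_congr rfl fun i _ => by rw [congrFun hf.2 i]
          rw [Finset.sum_congr rfl this, Finset.sum_const, nsmul_eq_mul]
          calc (((Finset.univ.filter fun f : Fin k → Fin m => F f = v)).card : ℝ)
                * ∏ i, ((q i : ℝ))⁻¹ ^ v i
              ≤ ((∏ i, (q i) ^ v i : ℕ) : ℝ) * ∏ i, ((q i : ℝ))⁻¹ ^ v i := by
                apply mul_le_mul_of_nonneg_right
                · exact_mod_cast fiber v hv
                · positivity
            _ = 1 := by
                push_cast
                rw [← Finset.prod_mul_distrib]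
                rw [Finset.prod_congr rfl fun i _ => ?_]
                · exact Finset.prod_const_one
                · rw [← mul_pow, mul_inv_cancel₀ (ne_of_gt (hqpos i)), one_pow]
      _ = (T.card : ℝ) := by rw [Finset.sum_const, nsmul_eq_mul, mul_one]
      _ = ((k * B + 1 : ℕ) : ℝ) ^ n := by
          rw [hT, Fintype.card_piFinset]
          push_cast
          simp
  -- conclude S ≤ 1 from polynomial growth
  by_contra hcon
  push_neg at hcon
  have hS1 : 1 < S := hcon
  have hlo := isLittleO_pow_const_const_pow_of_one_lt (R := ℝ) n hS1
  have hc : (0:ℝ) < (2 * ((B:ℝ) + 1) ^ n)⁻¹ := by positivity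
  have hev := hlo.def hc
  rw [Filter.eventually_atTop] at hev
  obtain ⟨N, hN⟩ := hev
  set k := max N 1 with hk
  have hk1 : 1 ≤ k := le_max_right _ _
  have h1 := key k
  have h2 := hN k (le_max_left _ _)
  have hSk : 0 < S ^ k := pow_pos (lt_trans one_pos hS1) k
  have hbound : ((k * B + 1 : ℕ) : ℝ) ^ n ≤ ((B:ℝ) + 1) ^ n * (k:ℝ) ^ n := by
    rw [← mul_pow]
    apply pow_le_pow_left₀ (by positivity)
    push_cast
    have : (1:ℝ) ≤ (k:ℝ) := by exact_mod_cast hk1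
    nlinarith
  have h2' : (k:ℝ) ^ n ≤ (2 * ((B:ℝ) + 1) ^ n)⁻¹ * S ^ k := by
    have := h2
    rw [Real.norm_eq_abs, Real.norm_eq_abs, abs_of_nonneg (by positivity),
      abs_of_nonneg (le_of_lt hSk)] at this
    exact this
  have : S ^ k ≤ ((B:ℝ) + 1) ^ n * ((2 * ((B:ℝ) + 1) ^ n)⁻¹ * S ^ k) := by
    calc S ^ k ≤ ((k * B + 1 : ℕ) : ℝ) ^ n := h1
      _ ≤ ((B:ℝ) + 1) ^ n * (k:ℝ) ^ n := hbound
      _ ≤ ((B:ℝ) + 1) ^ n * ((2 * ((B:ℝ) + 1) ^ n)⁻¹ * S ^ k) := by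
          apply mul_le_mul_of_nonneg_left h2' (by positivity)
  have hBpos : (0:ℝ) < ((B:ℝ) + 1) ^ n := by positivity
  rw [← mul_assoc] at this
  have : S ^ k ≤ S ^ k / 2 := by
    rw [show ((B:ℝ) + 1) ^ n * (2 * ((B:ℝ) + 1) ^ n)⁻¹ = 1/2 by field_simp] at this
    linarith
  linarith

/-- **Multi-channel entropy bound**: if `C` is a uniquely decodable `(q 1, …, q n)`-ary code
for a source with probability distribution `p` (all masses positive), then the expected
codeword description length `∑ j, p j * ∑ i, ℓᵢʲ * ln (q i)` (in nats) is at least the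
entropy `H = -∑ j, p j * ln (p j)`. -/
theorem multichannel_entropy_bound (n m : ℕ) (q : Fin n → ℕ)
    (hq : ∀ i, 2 ≤ q i) (hmono : Monotone q)
    (p : Fin m → ℝ) (hp : ∀ j, 0 < p j) (hsum : ∑ j, p j = 1)
    (C : Fin m → ∀ i, List (Fin (q i)))
    (hud : UniquelyDecodable C) :
    ∑ j, p j * ∑ i, ((C j i).length : ℝ) * Real.log (q i) ≥
      -∑ j, p j * Real.log (p j) := by
  classical
  have hqpos : ∀ i, (0:ℝ) < q i := fun i => by have := hq i; positivity
  set w : Fin m → ℝ := fun j => ∏ i, ((q i : ℝ))⁻¹ ^ (C j i).length with hw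
  have hwpos : ∀ j, 0 < w j := fun j =>
    Finset.prod_pos fun i _ => pow_pos (inv_pos.2 (hqpos i)) _
  have hkraft := kraft_sum_le_one hq C hud
  have hlogw : ∀ j, Real.log (w j) = -∑ i, ((C j i).length : ℝ) * Real.log (q i) := by
    intro j
    rw [hw]
    dsimp only
    rw [Real.log_prod (fun i _ => (pow_pos (inv_pos.2 (hqpos i)) _).ne'),
      ← Finset.sum_neg_distrib]
    refine Finset.sum_congr rfl fun i _ => ?_
    rw [Real.log_pow, Real.log_inv]
    ring
  have gibbs : ∑ j, p j * Real.log (w j / p j) ≤ 0 := by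
    calc ∑ j, p j * Real.log (w j / p j)
        ≤ ∑ j, p j * (w j / p j - 1) := Finset.sum_le_sum fun j _ =>
          mul_le_mul_of_nonneg_left
            (Real.log_le_sub_one_of_pos (div_pos (hwpos j) (hp j))) (hp j).le
      _ = ∑ j, (w j - p j) := by
          refine Finset.sum_congr rfl fun j _ => ?_
          rw [mul_sub, mul_div_cancel₀ _ (hp j).ne', mul_one]
      _ = (∑ j, w j) - 1 := by rw [Finset.sum_sub_distrib, hsum]
      _ ≤ 0 := by linarith [hkraft]
  have hsplit : ∑ j, p j * Real.log (w j / p j)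
      = ∑ j, p j * Real.log (w j) - ∑ j, p j * Real.log (p j) := by
    rw [← Finset.sum_sub_distrib]
    refine Finset.sum_congr rfl fun j _ => ?_
    rw [Real.log_div (hwpos j).ne' (hp j).ne']
    ring
  rw [hsplit] at gibbs
  have hexp : ∑ j, p j * Real.log (w j)
      = -∑ j, p j * ∑ i, ((C j i).length : ℝ) * Real.log (q i) := by
    rw [← Finset.sum_neg_distrib]
    exact Finset.sum_congr rfl fun j _ => by rw [hlogw j]; ring
  rw [hexp] at gibbs
  linarith
end

section
/- For any 2-channel prefix code with at least two codewords, there exists a channel i ∈ {1,2} such that for all codewords the i-th component is a non-empty string. -/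
/-- Two multi-channel words are prefix-free (to each other) if there exists at least one
channel `i` such that neither word's `i`-th component is a prefix of the other's. -/
def PrefixFree {n : ℕ} {q : Fin n → ℕ} (w v : ∀ i, List (Fin (q i))) : Prop :=
  ∃ i, ¬ (w i <+: v i) ∧ ¬ (v i <+: w i)

/-- A multi-channel prefix code: every pair of codewords of distinct source symbols is
prefix-free. -/
def IsPrefixCode {n m : ℕ} {q : Fin n → ℕ} (C : Fin m → ∀ i, List (Fin (q i))) : Prop :=
  ∀ a b, a ≠ b → PrefixFree (C a) (C b)

/-- For any `2`-channel prefix code with at least two codewords, there exists a channel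
`i ∈ {1, 2}` such that for all codewords the `i`-th component is a non-empty string. -/
theorem two_channel_prefix_code_has_always_nonempty_channel
    (q : Fin 2 → ℕ) (hq : ∀ i, 2 ≤ q i) (m : ℕ) (hm : 2 ≤ m)
    (C : Fin m → ∀ i, List (Fin (q i))) (hC : IsPrefixCode C) :
    ∃ i : Fin 2, ∀ j, C j i ≠ [] := by
  by_contra h
  push_neg at h
  obtain ⟨a, ha⟩ := h 0
  obtain ⟨b, hb⟩ := h 1
  by_cases hab : a = b
  · subst hab
    -- pick another codeword c ≠ a
    have h1 : Nontrivial (Fin m) := Fin.nontrivial_iff_two_le.mpr hm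
    obtain ⟨c, hc⟩ := exists_ne a
    obtain ⟨i, hi1, hi2⟩ := hC a c hc.symm
    fin_cases i
    · exact hi1 (ha ▸ List.nil_prefix)
    · exact hi1 (hb ▸ List.nil_prefix)
  · obtain ⟨i, hi1, hi2⟩ := hC a b hab
    fin_cases i
    · exact hi1 (ha ▸ List.nil_prefix)
    · exact hi2 (hb ▸ List.nil_prefix)
end

section
/- Let Q be a 2-channel prefix code such that the i-th component of every codeword is non-empty for a fixed channel i. Partition the codewords according to the first symbol of their i-th component, and within each part delete the first symbol of the i-th component of every codeword. Then within each part, any two words obtained from distinct codewords are prefix-free. -/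
/-- Let `C` be a `2`-channel prefix code such that the `i`-th component of every codeword is
non-empty, for a fixed channel `i`.  Partition the codewords according to the first symbol of
their `i`-th component (two codewords are in the same part iff their `i`-th components have
the same head), and within each part delete the first symbol of the `i`-th component of every
codeword.  Then within each part, any two words obtained from distinct codewords are
prefix-free. -/
theorem two_channel_prefix_code_truncation_prefix_free
    (q : Fin 2 → ℕ) (hq : ∀ i, 2 ≤ q i) (m : ℕ)
    (C : Fin m → ∀ i, List (Fin (q i))) (hC : IsPrefixCode C)
    (i : Fin 2) (hne : ∀ j, C j i ≠ []) :
    ∀ a b, a ≠ b → (C a i).head? = (C b i).head? →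
      PrefixFree (Function.update (C a) i ((C a i).tail))
        (Function.update (C b) i ((C b i).tail)) := by
  intro a b hab hhead
  obtain ⟨k, h1, h2⟩ := hC a b hab
  have hca : C a i = (C a i).head (hne a) :: (C a i).tail := (List.cons_head_tail _).symm
  have hcb : C b i = (C b i).head (hne b) :: (C b i).tail := (List.cons_head_tail _).symm
  have hh : (C a i).head (hne a) = (C b i).head (hne b) := by
    have := hhead
    rw [List.head?_eq_head (hne a), List.head?_eq_head (hne b)] at this
    exact Option.some.inj this
  refine ⟨k, ?_, ?_⟩ <;> by_cases hk : k = i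
  · subst hk
    simp only [Function.update_self]
    intro hp
    apply h1
    rw [hca, hcb, hh, List.cons_prefix_cons]
    exact ⟨rfl, hp⟩
  · simpa only [Function.update_of_ne hk] using h1
  · subst hk
    simp only [Function.update_self]
    intro hp
    apply h2
    rw [hca, hcb, hh, List.cons_prefix_cons]
    exact ⟨rfl, hp⟩
  · simpa only [Function.update_of_ne hk] using h2
end

section
/- Every 2-channel prefix code with finitely many codewords is tree-decodable: there exists a decoding tree whose leaves' associated words are exactly the codewords of the code. -/
/-- A multi-channel decoding tree for an `n`-channel system with alphabet sizes `q i`: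
every internal node is assigned a class `i`, and its outgoing edges are labeled by distinct
symbols of the `i`-th alphabet (so it has at most `q i` children); `children a` is the
subtree reached by the edge labeled `a`, if present. -/
inductive DecTree (n : ℕ) (q : Fin n → ℕ) : Type
  | leaf : DecTree n q
  | node (i : Fin n) (children : Fin (q i) → Option (DecTree n q)) : DecTree n q

/-- Well-formedness of a decoding tree: every internal node has at least one child and all
its subtrees are well-formed. -/
inductive DecTree.WF {n : ℕ} {q : Fin n → ℕ} : DecTree n q → Prop
  | leaf : DecTree.WF .leaf
  | node (i : Fin n) (c : Fin (q i) → Option (DecTree n q)) :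
      (∃ a, c a ≠ none) → (∀ a t, c a = some t → DecTree.WF t) →
      DecTree.WF (.node i c)

/-- `LeafWord t w` holds iff `w` is the word associated with some leaf of the decoding tree
`t`: for each internal node of class `i` on the root-to-leaf path, the outgoing edge label is
appended to the `i`-th component. -/
inductive DecTree.LeafWord {n : ℕ} {q : Fin n → ℕ} :
    DecTree n q → (∀ i, List (Fin (q i))) → Prop
  | leaf : DecTree.LeafWord .leaf (fun _ => [])
  | node {i : Fin n} {c : Fin (q i) → Option (DecTree n q)} {a : Fin (q i)}
      {t : DecTree n q} {w : ∀ i', List (Fin (q i'))} :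
      c a = some t → DecTree.LeafWord t w →
      DecTree.LeafWord (.node i c) (Function.update w i (a :: w i))

namespace TwoChannelAux

variable {q : Fin 2 → ℕ}

/-- total length of a word -/
def wmsr (w : ∀ i : Fin 2, List (Fin (q i))) : ℕ := (w 0).length + (w 1).length

lemma leafWord_leaf_iff (w : ∀ i : Fin 2, List (Fin (q i))) :
    DecTree.LeafWord .leaf w ↔ w = fun _ => [] := by
  constructor
  · intro h; cases h; rfl
  · rintro rfl; exact .leaf

lemma leafWord_node_iff (i : Fin 2) (c : Fin (q i) → Option (DecTree 2 q))
    (w : ∀ i : Fin 2, List (Fin (q i))) :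
    DecTree.LeafWord (.node i c) w ↔
      ∃ a t v, c a = some t ∧ DecTree.LeafWord t v ∧ w = Function.update v i (a :: v i) := by
  constructor
  · intro h
    cases h with
    | node hca hv => exact ⟨_, _, _, hca, hv, rfl⟩
  · rintro ⟨a, t, v, h1, h2, rfl⟩; exact .node h1 h2

lemma update_tail_cons (w : ∀ i : Fin 2, List (Fin (q i))) (i : Fin 2) (a : Fin (q i))
    (h : w i = a :: (w i).tail) :
    Function.update (Function.update w i (w i).tail) i
      (a :: (Function.update w i (w i).tail) i) = w := by
  rw [Function.update_self, Function.update_idem, ← h, Function.update_eq_self]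

lemma wmsr_update (i : Fin 2) (w : ∀ i : Fin 2, List (Fin (q i))) (l : List (Fin (q i))) :
    wmsr (Function.update w i l) + (w i).length = wmsr w + l.length := by
  fin_cases i <;>
    simp [wmsr, Function.update_apply] <;> omega

end TwoChannelAux
namespace TwoChannelAux

variable {q : Fin 2 → ℕ}

lemma head_cons {α : Type*} (l : List α) (a : α) (h : l.head? = some a) :
    l = a :: l.tail := by
  cases l with
  | nil => simp at h
  | cons b t => simp at h; rw [h]; rfl

lemma split_step (N : ℕ)
    (IH : ∀ S : Finset (∀ i : Fin 2, List (Fin (q i))),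
      (∑ w ∈ S, wmsr w) ≤ N → S.Nonempty →
      (∀ w ∈ S, ∀ v ∈ S, w ≠ v → PrefixFree w v) →
      ∃ t : DecTree 2 q, t.WF ∧ {w | t.LeafWord w} = ↑S)
    (S : Finset (∀ i : Fin 2, List (Fin (q i))))
    (hmsr : (∑ w ∈ S, wmsr w) ≤ N + 1) (hS : S.Nonempty)
    (hPF : ∀ w ∈ S, ∀ v ∈ S, w ≠ v → PrefixFree w v)
    (i : Fin 2) (hne : ∀ w ∈ S, w i ≠ []) :
    ∃ t : DecTree 2 q, t.WF ∧ {w | t.LeafWord w} = ↑S := by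
  classical
  set F : Fin (q i) → Finset (∀ i : Fin 2, List (Fin (q i))) := fun a =>
    (S.filter (fun w => (w i).head? = some a)).image
      (fun w => Function.update w i (w i).tail) with hF
  have hmem : ∀ (a : Fin (q i)) v, v ∈ F a ↔
      ∃ w ∈ S, (w i).head? = some a ∧ v = Function.update w i (w i).tail := by
    intro a v
    simp only [hF, Finset.mem_image, Finset.mem_filter]
    constructor
    · rintro ⟨w, ⟨hw1, hw2⟩, rfl⟩; exact ⟨w, hw1, hw2, rfl⟩
    · rintro ⟨w, hw1, hw2, rfl⟩; exact ⟨w, ⟨hw1, hw2⟩, rfl⟩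
  have hrec : ∀ (w : ∀ i : Fin 2, List (Fin (q i))), ∀ a : Fin (q i), (w i).head? = some a →
      Function.update (Function.update w i (w i).tail) i
        (a :: (Function.update w i (w i).tail) i) = w := by
    intro w a h
    exact update_tail_cons w i a (head_cons _ _ h)
  -- measure bound
  have hbound : ∀ a : Fin (q i), (F a).Nonempty → (∑ w ∈ F a, wmsr w) ≤ N := by
    intro a ha
    set Fl := S.filter (fun w => (w i).head? = some a) with hFl
    have hinj : ∀ w ∈ Fl, ∀ w' ∈ Fl,
        Function.update w i (w i).tail = Function.update w' i (w' i).tail → w = w' := by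
      intro w hw w' hw' h
      rw [Finset.mem_filter] at hw hw'
      have h1 := hrec w a hw.2
      have h2 := hrec w' a hw'.2
      rw [← h1, ← h2, h]
    have hsum : (∑ v ∈ F a, wmsr v) + Fl.card = ∑ w ∈ Fl, wmsr w := by
      have : (∑ v ∈ F a, wmsr v) = ∑ w ∈ Fl, wmsr (Function.update w i (w i).tail) := by
        rw [hF]
        exact Finset.sum_image hinj
      rw [this, Finset.card_eq_sum_ones, ← Finset.sum_add_distrib]
      refine Finset.sum_congr rfl ?_
      intro w hw
      rw [Finset.mem_filter] at hw
      have hu := wmsr_update i w (w i).tail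
      have hl : (w i).length = (w i).tail.length + 1 := by
        conv_lhs => rw [head_cons _ _ hw.2]
        simp
      clear * - hu hl
      omega
    have hcard : 1 ≤ Fl.card := by
      obtain ⟨v, hv⟩ := ha
      rw [hmem] at hv
      obtain ⟨w, hw1, hw2, rfl⟩ := hv
      exact Finset.card_pos.mpr ⟨w, Finset.mem_filter.mpr ⟨hw1, hw2⟩⟩
    have hle : (∑ w ∈ Fl, wmsr w) ≤ ∑ w ∈ S, wmsr w :=
      Finset.sum_le_sum_of_subset (Finset.filter_subset _ _)
    omega
  -- prefix-freeness of each child code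
  have hPFa : ∀ a : Fin (q i), ∀ v ∈ F a, ∀ v' ∈ F a, v ≠ v' → PrefixFree v v' := by
    intro a v hv v' hv' hvv
    rw [hmem] at hv hv'
    obtain ⟨w, hw, hwh, rfl⟩ := hv
    obtain ⟨w', hw', hwh', rfl⟩ := hv'
    have hww : w ≠ w' := fun h => hvv (by rw [h])
    obtain ⟨j, hj1, hj2⟩ := hPF w hw w' hw' hww
    refine ⟨j, ?_, ?_⟩
    · by_cases hji : j = i
      · subst hji
        rw [Function.update_self, Function.update_self]
        intro hpre
        exact hj1 (by
          rw [head_cons _ _ hwh, head_cons _ _ hwh']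
          exact List.cons_prefix_cons.mpr ⟨rfl, hpre⟩)
      · rw [Function.update_of_ne hji, Function.update_of_ne hji]
        exact hj1
    · by_cases hji : j = i
      · subst hji
        rw [Function.update_self, Function.update_self]
        intro hpre
        exact hj2 (by
          rw [head_cons _ _ hwh, head_cons _ _ hwh']
          exact List.cons_prefix_cons.mpr ⟨rfl, hpre⟩)
      · rw [Function.update_of_ne hji, Function.update_of_ne hji]
        exact hj2
  have hch : ∀ a : Fin (q i), (F a).Nonempty →
      ∃ t : DecTree 2 q, t.WF ∧ {w | t.LeafWord w} = ↑(F a) := by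
    intro a ha
    exact IH (F a) (hbound a ha) ha (hPFa a)
  choose T hT1 hT2 using hch
  -- a nonempty child exists
  obtain ⟨w₀, hw₀⟩ := hS
  obtain ⟨a₀, ha₀⟩ : ∃ a : Fin (q i), (w₀ i).head? = some a := by
    cases h : w₀ i with
    | nil => exact absurd h (hne w₀ hw₀)
    | cons b t => exact ⟨b, by simp [h]⟩
  have ha₀ne : (F a₀).Nonempty :=
    ⟨_, (hmem a₀ _).mpr ⟨w₀, hw₀, ha₀, rfl⟩⟩
  refine ⟨.node i (fun a => if h : (F a).Nonempty then some (T a h) else none), ?_, ?_⟩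
  · refine .node i _ ⟨a₀, ?_⟩ ?_
    · rw [dif_pos ha₀ne]; simp
    · intro a t h
      by_cases ha : (F a).Nonempty
      · rw [dif_pos ha] at h
        injection h with h; exact h ▸ hT1 a ha
      · rw [dif_neg ha] at h; exact absurd h (by simp)
  · ext w
    simp only [Set.mem_setOf_eq, leafWord_node_iff, Finset.mem_coe]
    constructor
    · rintro ⟨a, t, v, hca, hv, rfl⟩
      by_cases ha : (F a).Nonempty
      · rw [dif_pos ha] at hca
        injection hca with hca
        subst hca
        have hvF : v ∈ F a := by
          have : v ∈ ({w | DecTree.LeafWord (T a ha) w} : Set _) := hv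
          rw [hT2 a ha] at this
          exact this
        rw [hmem] at hvF
        obtain ⟨w', hw', hwh', rfl⟩ := hvF
        rw [hrec w' a hwh']
        exact hw'
      · rw [dif_neg ha] at hca; exact absurd hca (by simp)
    · intro hw
      obtain ⟨a, ha⟩ : ∃ a : Fin (q i), (w i).head? = some a := by
        cases h : w i with
        | nil => exact absurd h (hne w hw)
        | cons b t => exact ⟨b, by simp [h]⟩
      have hvF : Function.update w i (w i).tail ∈ F a := (hmem a _).mpr ⟨w, hw, ha, rfl⟩
      have hane : (F a).Nonempty := ⟨_, hvF⟩
      refine ⟨a, T a hane, Function.update w i (w i).tail, dif_pos hane, ?_, ?_⟩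
      · show Function.update w i (w i).tail ∈ {w | DecTree.LeafWord (T a hane) w}
        rw [hT2 a hane]; exact hvF
      · exact (hrec w a ha).symm

end TwoChannelAux
namespace TwoChannelAux

variable {q : Fin 2 → ℕ}

lemma exists_tree : ∀ (N : ℕ) (S : Finset (∀ i : Fin 2, List (Fin (q i)))),
    (∑ w ∈ S, wmsr w) ≤ N → S.Nonempty →
    (∀ w ∈ S, ∀ v ∈ S, w ≠ v → PrefixFree w v) →
    ∃ t : DecTree 2 q, t.WF ∧ {w | t.LeafWord w} = ↑S := by
  intro N
  induction N with
  | zero =>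
    intro S h0 hS hPF
    have hall : ∀ w ∈ S, w = fun _ => [] := by
      intro w hw
      have hle : wmsr w ≤ ∑ x ∈ S, wmsr x :=
        Finset.single_le_sum (fun _ _ => Nat.zero_le _) hw
      have hz : (w 0).length + (w 1).length = 0 := by
        have : wmsr w = 0 := by omega
        simpa [wmsr] using this
      have e0 : w 0 = [] := by rw [← List.length_eq_zero_iff]; omega
      have e1 : w 1 = [] := by rw [← List.length_eq_zero_iff]; omega
      funext j
      fin_cases j
      · exact e0
      · exact e1
    refine ⟨.leaf, .leaf, ?_⟩
    ext w
    simp only [Set.mem_setOf_eq, leafWord_leaf_iff, Finset.mem_coe]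
    constructor
    · rintro rfl
      obtain ⟨v, hv⟩ := hS
      exact hall v hv ▸ hv
    · intro hw; exact hall w hw
  | succ N IH =>
    intro S hmsr hS hPF
    by_cases h0 : ∀ w ∈ S, w 0 ≠ []
    · exact split_step N IH S hmsr hS hPF 0 h0
    · push_neg at h0
      obtain ⟨w0, hw0S, hw00⟩ := h0
      by_cases h1 : w0 1 = []
      · -- w0 is the empty word and S = {w0}
        have hall : ∀ v ∈ S, v = w0 := by
          intro v hv
          by_contra hvw
          obtain ⟨j, hj1, hj2⟩ := hPF v hv w0 hw0S hvw
          fin_cases j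
          · exact hj2 (show w0 0 <+: v 0 by rw [hw00]; exact List.nil_prefix)
          · exact hj2 (show w0 1 <+: v 1 by rw [h1]; exact List.nil_prefix)
        have hw0e : w0 = fun _ => [] := by
          funext j
          fin_cases j
          · exact hw00
          · exact h1
        refine ⟨.leaf, .leaf, ?_⟩
        ext w
        simp only [Set.mem_setOf_eq, leafWord_leaf_iff, Finset.mem_coe]
        constructor
        · rintro rfl
          exact hw0e ▸ hw0S
        · intro hw
          rw [hall w hw, hw0e]
      · have h1' : ∀ w ∈ S, w 1 ≠ [] := by
          intro v hv hv1
          by_cases hvw : v = w0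
          · exact h1 (hvw ▸ hv1)
          · obtain ⟨j, hj1, hj2⟩ := hPF w0 hw0S v hv (fun h => hvw h.symm)
            fin_cases j
            · exact hj1 (show w0 0 <+: v 0 by rw [hw00]; exact List.nil_prefix)
            · exact hj2 (show v 1 <+: w0 1 by rw [hv1]; exact List.nil_prefix)
        exact split_step N IH S hmsr hS hPF 1 h1'

end TwoChannelAux

/-- **Every `2`-channel prefix code (with finitely many codewords) is tree-decodable**:
there exists a decoding tree whose leaves' associated words are exactly the codewords of the
code. -/
theorem two_channel_prefix_code_is_tree_decodable
    (q : Fin 2 → ℕ) (hq : ∀ i, 2 ≤ q i) (m : ℕ) (hm : 1 ≤ m)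
    (C : Fin m → ∀ i, List (Fin (q i))) (hC : IsPrefixCode C) :
    ∃ t : DecTree 2 q, t.WF ∧ {w | t.LeafWord w} = Set.range C := by
  classical
  set S : Finset (∀ i : Fin 2, List (Fin (q i))) := Finset.image C Finset.univ with hSdef
  have hS : S.Nonempty := ⟨C ⟨0, hm⟩, Finset.mem_image_of_mem _ (Finset.mem_univ _)⟩
  have hPF : ∀ w ∈ S, ∀ v ∈ S, w ≠ v → PrefixFree w v := by
    intro w hw v hv hne
    rw [hSdef, Finset.mem_image] at hw hv
    obtain ⟨a, _, rfl⟩ := hw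
    obtain ⟨b, _, rfl⟩ := hv
    exact hC a b (fun h => hne (by rw [h]))
  obtain ⟨t, h1, h2⟩ := TwoChannelAux.exists_tree (∑ w ∈ S, TwoChannelAux.wmsr w) S
    le_rfl hS hPF
  refine ⟨t, h1, ?_⟩
  rw [h2, hSdef]
  simp [Finset.coe_image]
end

section
/- Every tree-decodable (q_1,…,q_n)-ary code is a prefix code: if two distinct leaves of a decoding tree are given, the associated words are prefix-free, because in the channel corresponding to the class of their lowest common ancestor neither word's component is a prefix of the other's. -/
/-- **Every tree-decodable `(q 1, …, q n)`-ary code is a prefix code**: the words associated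
with two distinct leaves of a decoding tree are prefix-free — in the channel corresponding to
the class of their lowest common ancestor neither word's component is a prefix of the
other's. -/
theorem tree_decodable_is_prefix_code (n : ℕ) (q : Fin n → ℕ) (hq : ∀ i, 2 ≤ q i)
    (t : DecTree n q) (hwf : t.WF)
    (w v : ∀ i, List (Fin (q i))) (hw : t.LeafWord w) (hv : t.LeafWord v) (hne : w ≠ v) :
    ∃ i, ¬ (w i <+: v i) ∧ ¬ (v i <+: w i) := by
  clear hq hwf
  induction hw generalizing v with
  | leaf =>
    cases hv
    exact absurd rfl hne
  | @node i c a t w hca hlw ih =>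
    cases hv with
    | @node _ _ b t' v' hcb hlv =>
      by_cases hab : a = b
      · subst hab
        rw [hca] at hcb
        injection hcb with ht
        subst ht
        have hne' : w ≠ v' := by
          rintro rfl; exact hne rfl
        obtain ⟨j, h1, h2⟩ := ih v' hlv hne'
        refine ⟨j, ?_, ?_⟩
        · by_cases hij : j = i
          · subst hij
            simp only [Function.update_self, List.cons_prefix_cons]
            rintro ⟨-, h⟩; exact h1 h
          · simpa [Function.update_of_ne hij] using h1
        · by_cases hij : j = i
          · subst hij
            simp only [Function.update_self, List.cons_prefix_cons]
            rintro ⟨-, h⟩; exact h2 h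
          · simpa [Function.update_of_ne hij] using h2
      · refine ⟨i, ?_, ?_⟩ <;>
          simp only [Function.update_self, List.cons_prefix_cons] <;>
          rintro ⟨h, -⟩
        · exact hab h
        · exact hab h.symm
end

section
/- Local redundancy theorem for multi-channel tree-decodable codes: the redundancy of a multi-channel tree-decodable code equals the sum of the local redundancies of the internal nodes of its decoding tree, i.e., L − H(Z) = Σ_{k ∈ I} r_k nats, where r_k = s_k (ln α_k − h_k) is the local redundancy of internal node k. -/
/-- A multi-channel decoding tree for an `n`-channel system with alphabet sizes `q i`:
leaves carry probability masses and every internal node is assigned a channel class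
`i ∈ {1,…,n}`. -/
inductive PTree (n : ℕ) (q : Fin n → ℕ) : Type
  | leaf (mass : ℝ) : PTree n q
  | node (i : Fin n) (children : List (PTree n q)) : PTree n q

namespace PTree

variable {n : ℕ} {q : Fin n → ℕ}

/-- The list of leaf masses of a decoding tree (in left-to-right order). -/
def leafMasses : PTree n q → List ℝ
  | .leaf x => [x]
  | .node _ cs => (cs.attach.map fun c => leafMasses c.1).flatten
decreasing_by
  simp_wf
  have := List.sizeOf_lt_of_mem c.2
  omega

/-- The total leaf mass of a tree; for a subtree rooted at an internal node this is the
reaching probability `s` of that node. -/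
noncomputable def mass (t : PTree n q) : ℝ := t.leafMasses.sum

/-- Well-formedness of a decoding tree: every internal node of class `i` has at least one
and at most `q i` children (its outgoing edges being labeled by distinct symbols of the
`i`-th alphabet), and all its subtrees are well-formed. -/
inductive WF : PTree n q → Prop
  | leaf (x : ℝ) : WF (.leaf x)
  | node (i : Fin n) (cs : List (PTree n q)) :
      cs ≠ [] → cs.length ≤ q i → (∀ c ∈ cs, WF c) → WF (.node i cs)

/-- The list of subtrees rooted at the internal nodes of a tree (one entry for each
occurrence of an internal node). -/
def internals : PTree n q → List (PTree n q)
  | .leaf _ => []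
  | .node i cs => .node i cs :: (cs.attach.map fun c => internals c.1).flatten
decreasing_by
  simp_wf
  have := List.sizeOf_lt_of_mem c.2
  omega

/-- `ln α` at the root: the natural logarithm of the alphabet size of the channel assigned
to the root node (`0` for a leaf). -/
noncomputable def rootLogAlpha : PTree n q → ℝ
  | .leaf _ => 0
  | .node i _ => Real.log (q i)

/-- The entropy (in nats) of the conditional branching distribution at the root node: the
probabilities are the children's total leaf masses divided by the reaching probability of
the node (`0` for a leaf). -/
noncomputable def rootBranchEnt : PTree n q → ℝ
  | .leaf _ => 0
  | .node _ cs =>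
      -((cs.map fun c => (mass c / (cs.map mass).sum) *
          Real.log (mass c / (cs.map mass).sum)).sum)

/-- The list of pairs (leaf mass, description length of the leaf), where the description
length of a leaf is the sum of `ln (q i)` over its internal-node ancestors of class `i`. -/
noncomputable def leafData : PTree n q → List (ℝ × ℝ)
  | .leaf x => [(x, 0)]
  | .node i cs =>
      ((cs.attach.map fun c => leafData c.1).flatten).map fun pr =>
        (pr.1, pr.2 + Real.log (q i))
decreasing_by
  simp_wf
  have := List.sizeOf_lt_of_mem c.2
  omega

/-- The expected codeword (description) length of the tree in nats: the expectation of the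
leaf description lengths under the leaf masses. -/
noncomputable def expLen (t : PTree n q) : ℝ := (t.leafData.map fun pr => pr.1 * pr.2).sum

end PTree


namespace PTree
variable {n : ℕ} {q : Fin n → ℕ}

lemma leafMasses_node (i : Fin n) (cs : List (PTree n q)) :
    (PTree.node i cs).leafMasses = (cs.map leafMasses).flatten := by
  rw [leafMasses, List.attach_map_val]

lemma internals_node (i : Fin n) (cs : List (PTree n q)) :
    (PTree.node i cs).internals = .node i cs :: (cs.map internals).flatten := by
  rw [internals, List.attach_map_val]

lemma leafData_node (i : Fin n) (cs : List (PTree n q)) :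
    (PTree.node i cs).leafData =
      ((cs.map leafData).flatten).map fun pr => (pr.1, pr.2 + Real.log (q i)) := by
  rw [leafData, List.attach_map_val]

lemma mass_node (i : Fin n) (cs : List (PTree n q)) :
    (PTree.node i cs).mass = (cs.map mass).sum := by
  simp only [mass, leafMasses_node, List.sum_flatten, List.map_map]
  rfl

lemma leafData_fst : ∀ t : PTree n q, t.leafData.map Prod.fst = t.leafMasses
  | .leaf x => by simp [leafData, leafMasses]
  | .node i cs => by
      rw [leafData_node, leafMasses_node, List.map_map, List.map_flatten, List.map_map]
      congr 1
      refine List.map_congr_left fun c hc => ?_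
      simpa [Function.comp_def] using leafData_fst c
termination_by t => sizeOf t
decreasing_by
  simp_wf
  have := List.sizeOf_lt_of_mem hc
  omega


lemma sum_map_flatten_map {α β : Type*} (l : List α) (f : α → List β) (g : β → ℝ) :
    (((l.map f).flatten).map g).sum = (l.map fun a => ((f a).map g).sum).sum := by
  rw [List.map_flatten, List.sum_flatten, List.map_map, List.map_map]
  rfl

lemma mass_nonneg (t : PTree n q) (h : ∀ x ∈ t.leafMasses, 0 ≤ x) : 0 ≤ t.mass :=
  List.sum_nonneg h

theorem key : ∀ t : PTree n q, (∀ x ∈ t.leafMasses, 0 ≤ x) →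
    t.expLen + ((t.leafMasses.map fun p => p * Real.log p).sum)
        - t.mass * Real.log t.mass
      = ((t.internals.map fun k => k.mass * (k.rootLogAlpha - k.rootBranchEnt)).sum)
  | .leaf x, _ => by
      simp [expLen, leafData, leafMasses, mass, internals]
  | .node i cs, hnn => by
      have hch : ∀ c ∈ cs, ∀ x ∈ c.leafMasses, 0 ≤ x := by
        intro c hc x hx
        apply hnn
        rw [leafMasses_node, List.mem_flatten]
        exact ⟨c.leafMasses, List.mem_map_of_mem hc, hx⟩
      have hm : ∀ c ∈ cs, 0 ≤ mass c := fun c hc => mass_nonneg c (hch c hc)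
      set M : ℝ := (cs.map mass).sum with hM
      set L : ℝ := Real.log (q i) with hL
      have f1 : (PTree.node i cs).expLen
          = (cs.map expLen).sum + M * L := by
        rw [expLen, leafData_node, List.map_map, sum_map_flatten_map]
        have h1 : (cs.map fun c => ((c.leafData).map ((fun pr : ℝ × ℝ => pr.1 * pr.2) ∘
              (fun pr : ℝ × ℝ => (pr.1, pr.2 + L)))).sum)
            = cs.map fun c => expLen c + mass c * L := by
          refine List.map_congr_left fun c _ => ?_
          have h2 : (c.leafData).map ((fun pr : ℝ × ℝ => pr.1 * pr.2) ∘
                (fun pr : ℝ × ℝ => (pr.1, pr.2 + L)))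
              = (c.leafData).map (fun pr : ℝ × ℝ => pr.1 * pr.2 + pr.1 * L) := by
            refine List.map_congr_left fun pr _ => ?_
            simp [mul_add]
          rw [h2, List.sum_map_add, List.sum_map_mul_right, expLen, leafData_fst]
          rfl
        rw [h1, List.sum_map_add, List.sum_map_mul_right]
      have f2 : (((PTree.node i cs).leafMasses.map fun p => p * Real.log p).sum)
          = (cs.map fun c => ((c.leafMasses.map fun p => p * Real.log p).sum)).sum := by
        rw [leafMasses_node, sum_map_flatten_map]
      have hent : M * (PTree.node i cs).rootBranchEnt
          = M * Real.log M - (cs.map fun c => mass c * Real.log (mass c)).sum := by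
        rw [rootBranchEnt]
        rw [mul_neg, ← List.sum_map_mul_left]
        have h3 : (cs.map fun c => M * ((mass c / M) * Real.log (mass c / M)))
            = cs.map fun c => mass c * Real.log (mass c) + mass c * (-Real.log M) := by
          refine List.map_congr_left fun c hc => ?_
          by_cases h0 : mass c = 0
          · simp [h0]
          · have hpos : 0 < mass c := lt_of_le_of_ne (hm c hc) (Ne.symm h0)
            have hMc : mass c ≤ M := by
              refine List.single_le_sum (by simpa using hm) _ ?_
              exact List.mem_map_of_mem hc
            have hMpos : 0 < M := lt_of_lt_of_le hpos hMc
            rw [Real.log_div h0 hMpos.ne']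
            field_simp
            ring
        rw [h3, List.sum_map_add, List.sum_map_mul_right]
        ring
      have f3 : (cs.map fun c =>
            ((c.internals.map fun k => k.mass * (k.rootLogAlpha - k.rootBranchEnt)).sum)).sum
          = (cs.map expLen).sum
            + (cs.map fun c => ((c.leafMasses.map fun p => p * Real.log p).sum)).sum
            - (cs.map fun c => mass c * Real.log (mass c)).sum := by
        have h4 : (cs.map fun c =>
            ((c.internals.map fun k => k.mass * (k.rootLogAlpha - k.rootBranchEnt)).sum))
            = cs.map fun c => c.expLen
              + (((c.leafMasses.map fun p => p * Real.log p).sum)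
              + (-1) * (mass c * Real.log (mass c))) := by
          refine List.map_congr_left fun c hc => ?_
          have := key c (hch c hc)
          rw [← this]
          ring
        rw [h4, List.sum_map_add, List.sum_map_add, List.sum_map_mul_left]
        ring
      rw [f1, f2, internals_node, List.map_cons, List.sum_cons, mass_node, sum_map_flatten_map,
        f3, mul_sub]
      have hroot : (PTree.node i cs).rootLogAlpha = L := rfl
      rw [hroot]
      linarith [hent]
termination_by t => sizeOf t
decreasing_by
  simp_wf
  have := List.sizeOf_lt_of_mem hc
  omega

end PTree

/-- **Local redundancy theorem** for multi-channel tree-decodable codes: the redundancy of a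
tree-decodable code equals the sum of the local redundancies of the internal nodes of its
decoding tree, i.e. `L - H(Z) = ∑_{k ∈ I} r_k` nats, where `r_k = s_k (ln α_k - h_k)`. -/
theorem local_redundancy_theorem (n : ℕ) (q : Fin n → ℕ)
    (hq : ∀ i, 2 ≤ q i) (hmono : Monotone q)
    (t : PTree n q) (hwf : t.WF)
    (hnn : ∀ x ∈ t.leafMasses, 0 ≤ x) (hsum : t.leafMasses.sum = 1) :
    t.expLen - (-((t.leafMasses.map fun p => p * Real.log p).sum)) =
      ((t.internals.map fun k => k.mass * (k.rootLogAlpha - k.rootBranchEnt)).sum) := by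
  have h := PTree.key t hnn
  have hm1 : t.mass = 1 := hsum
  rw [hm1, Real.log_one, mul_zero, sub_zero] at h
  linarith [h]
end
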